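/- arXiv:1111.1010 — 4 statements merged into one kernel-verified Lean document; each statement's English description precedes it below -/
import Mathlib

section
/- Let X be a contractible topological space and let Y ⊆ X × (0,1]. Suppose R : (X × (0,1]) × [0,1] → X × (0,1] is a continuous deformation retraction of X × (0,1] onto Y (i.e. R(p,0) = p for all p, R(p,1) ∈ Y for all p, and R(y,1) = y for all y ∈ Y) which maps (X × {1}) × [0,1] into X × {1} and whose restriction to X × {1} is a contraction of X × {1} to a point (y,1) (i.e. R((x,1),1) = (y,1) for all x ∈ X). Then for every point y' ∈ X, every contraction C' : X × [0,1] → X of X to y' (i.e. C'(x,0) = x and C'(x,1) = y' for all x ∈ X), and every ε with 0 < ε < 1, there exist a subspace Y' ⊆ X × (0,1] and a continuous deformation retraction R' of X × (0,1] onto Y' such that Y' ∩ (X × (0,ε]) = Y ∩ (X × (0,ε]), R' maps (X × {1}) × [0,1] into X × {1}, and R'((x,1),t) = (C'(x,t),1) for all x ∈ X and t ∈ [0,1]. -/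
/-- The half-open interval (0,1] used as the second factor of the prism X × (0,1]. -/
def ioc01 : Set ℝ := Set.Ioc 0 1

/-- The point 1 ∈ (0,1]. -/
def iocTop : ioc01 := ⟨1, by norm_num [ioc01, Set.mem_Ioc]⟩

/- Auxiliary real-valued gadgets for the construction. -/

/-- Time-`t` vertical squeeze: identity on `(0,ε]`, maps `1` to `1 - t(1-ε)/2`. -/
noncomputable def vlow (ε t σ : ℝ) : ℝ := min σ ((1 - t/2)*σ + t*ε/2)

/-- Inverse of the time-`t` vertical squeeze. -/
noncomputable def vinv (ε t h : ℝ) : ℝ := max h ((h - t*ε/2)/(1 - t/2))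

/-- The moving cut height. -/
noncomputable def hcut (ε t : ℝ) : ℝ := 1 - t*(1-ε)/2

/-- Input height for the low-region formula. -/
noncomputable def minput (ε t s : ℝ) : ℝ := vinv ε t (min s (hcut ε t))

/-- First time parameter for the high-region formula. -/
noncomputable def af (ε s t : ℝ) : ℝ := min t (4*(1-s)/(1-ε))

/-- Second time parameter for the high-region formula. -/
noncomputable def bf (ε s t : ℝ) : ℝ := max 0 (min t (2*t - 4*(1-s)/(1-ε)))

/-- Spine parameter. -/
noncomputable def spf (ε s : ℝ) : ℝ := max 0 (min 1 (2 - 4*(1-s)/(1-ε)))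

lemma hcut_pos {ε t : ℝ} (hε0 : 0 < ε) (hε1 : ε < 1) (ht0 : 0 ≤ t) (ht1 : t ≤ 1) :
    0 < hcut ε t := by
  unfold hcut; nlinarith

lemma hcut_le_one {ε t : ℝ} (hε1 : ε < 1) (ht0 : 0 ≤ t) : hcut ε t ≤ 1 := by
  unfold hcut; nlinarith

lemma hcut_one {ε : ℝ} : hcut ε 1 = (1+ε)/2 := by unfold hcut; ring

lemma minput_mem {ε t s : ℝ} (hε0 : 0 < ε) (hε1 : ε < 1) (ht0 : 0 ≤ t) (ht1 : t ≤ 1)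
    (hs0 : 0 < s) (hs1 : s ≤ 1) : minput ε t s ∈ Set.Ioc (0:ℝ) 1 := by
  have hc0 : 0 < hcut ε t := hcut_pos hε0 hε1 ht0 ht1
  have hd : (0:ℝ) < 1 - t/2 := by linarith
  constructor
  · exact lt_of_lt_of_le (lt_min hs0 hc0) (le_max_left _ _)
  · apply max_le
    · exact le_trans (min_le_left _ _) hs1
    · rw [div_le_one hd]
      have h2 : min s (hcut ε t) ≤ hcut ε t := min_le_right _ _
      have h3 : hcut ε t = 1 - t*(1-ε)/2 := rfl
      nlinarith

lemma vlow_mem {ε t σ : ℝ} (hε0 : 0 ≤ ε) (ht0 : 0 ≤ t) (ht1 : t ≤ 1)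
    (hσ0 : 0 < σ) (hσ1 : σ ≤ 1) : vlow ε t σ ∈ Set.Ioc (0:ℝ) 1 := by
  constructor
  · apply lt_min hσ0; nlinarith
  · exact le_trans (min_le_left _ _) hσ1

lemma af_mem {ε s t : ℝ} (hε1 : ε < 1) (ht0 : 0 ≤ t) (ht1 : t ≤ 1) (hs1 : s ≤ 1) :
    af ε s t ∈ Set.Icc (0:ℝ) 1 := by
  constructor
  · apply le_min ht0
    apply div_nonneg (by linarith) (by linarith)
  · exact le_trans (min_le_left _ _) ht1

lemma bf_mem {ε s t : ℝ} (ht1 : t ≤ 1) : bf ε s t ∈ Set.Icc (0:ℝ) 1 := by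
  constructor
  · exact le_max_left _ _
  · exact max_le (by norm_num) (le_trans (min_le_left _ _) ht1)

lemma spf_mem {ε s : ℝ} : spf ε s ∈ Set.Icc (0:ℝ) 1 := by
  constructor
  · exact le_max_left _ _
  · exact max_le (by norm_num) (min_le_left _ _)

/-- At the cut, the inverse squeeze reaches height 1. -/
lemma minput_at_hcut {ε t s : ℝ} (hε1 : ε < 1) (ht0 : 0 ≤ t) (ht1 : t ≤ 1)
    (hs : s = hcut ε t) : minput ε t s = 1 := by
  have hd : (0:ℝ) < 1 - t/2 := by linarith
  have h1 : min s (hcut ε t) = hcut ε t := by rw [hs, min_self]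
  unfold minput vinv
  rw [h1]
  have h2 : hcut ε t - t*ε/2 = 1 - t/2 := by unfold hcut; ring
  rw [h2, div_self (ne_of_gt hd)]
  exact max_eq_right (hcut_le_one hε1 ht0)

lemma vlow_one {ε t : ℝ} (hε1 : ε < 1) (ht0 : 0 ≤ t) : vlow ε t 1 = hcut ε t := by
  unfold vlow hcut
  rw [min_eq_right (by nlinarith)]
  ring

lemma vlow_t_zero {ε σ : ℝ} : vlow ε 0 σ = σ := by
  unfold vlow; rw [show (1 - (0:ℝ)/2)*σ + 0*ε/2 = σ by ring, min_self]

lemma minput_t_zero {ε s : ℝ} (hε1 : ε < 1) (hs1 : s ≤ 1) : minput ε 0 s = s := by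
  unfold minput vinv hcut
  rw [show (1:ℝ) - 0*(1-ε)/2 = 1 by ring, min_eq_left hs1]
  rw [show (s - 0*ε/2)/(1 - (0:ℝ)/2) = s by norm_num, max_self]

lemma vlow_id_low {ε t σ : ℝ} (ht0 : 0 ≤ t) (hσ : σ ≤ ε) : vlow ε t σ = σ := by
  unfold vlow
  apply min_eq_left
  nlinarith

lemma vlow_gt_eps {ε t σ : ℝ} (ht1 : t ≤ 1) (hσ : ε < σ) : ε < vlow ε t σ := by
  unfold vlow
  apply lt_min hσ
  nlinarith

lemma vlow_le_hcut_one {ε σ : ℝ} (hσ1 : σ ≤ 1) : vlow ε 1 σ ≤ hcut ε 1 := by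
  unfold vlow hcut
  refine le_trans (min_le_right _ _) ?_
  nlinarith

lemma vinv_vlow_one {ε σ : ℝ} (hε0 : 0 < ε) (hσ0 : 0 < σ) (hσ1 : σ ≤ 1) :
    minput ε 1 (vlow ε 1 σ) = σ := by
  have h1 : min (vlow ε 1 σ) (hcut ε 1) = vlow ε 1 σ :=
    min_eq_left (vlow_le_hcut_one hσ1)
  unfold minput vinv
  rw [h1]
  rcases le_total σ ε with h | h
  · rw [vlow_id_low zero_le_one h]
    rw [max_eq_left] <;> rw [div_le_iff₀ (by norm_num : (0:ℝ) < 1 - 1/2)] <;> nlinarith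
  · have h2 : vlow ε 1 σ = (1 - 1/2)*σ + 1*ε/2 := by
      unfold vlow; apply min_eq_right; nlinarith
    rw [h2]
    rw [show ((1 - 1/2)*σ + 1*ε/2 - 1*ε/2)/(1 - (1:ℝ)/2) = σ by norm_num]
    exact max_eq_right (by nlinarith)


/- Packaged (subtype-level) versions of the gadgets. -/

noncomputable def minputI (ε : ℝ) (hε0 : 0 < ε) (hε1 : ε < 1)
    (t : unitInterval) (s : ioc01) : ioc01 :=
  ⟨minput ε (t : ℝ) (s : ℝ), minput_mem hε0 hε1 t.2.1 t.2.2 s.2.1 s.2.2⟩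

noncomputable def vlowI (ε : ℝ) (hε0 : 0 ≤ ε) (t : unitInterval) (s : ioc01) : ioc01 :=
  ⟨vlow ε (t : ℝ) (s : ℝ), vlow_mem hε0 t.2.1 t.2.2 s.2.1 s.2.2⟩

noncomputable def afI (ε : ℝ) (hε1 : ε < 1) (s : ioc01) (t : unitInterval) : unitInterval :=
  ⟨af ε (s : ℝ) (t : ℝ), af_mem hε1 t.2.1 t.2.2 s.2.2⟩

noncomputable def bfI (ε : ℝ) (s : ioc01) (t : unitInterval) : unitInterval :=
  ⟨bf ε (s : ℝ) (t : ℝ), bf_mem t.2.2⟩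

/-- Spine parameter packaged in the unit interval. -/
noncomputable def spMap (ε s : ℝ) : unitInterval := ⟨spf ε s, spf_mem⟩

lemma minputI_zero {ε : ℝ} (hε0 : 0 < ε) (hε1 : ε < 1) (s : ioc01) :
    minputI ε hε0 hε1 0 s = s :=
  Subtype.ext (minput_t_zero hε1 s.2.2)

lemma minputI_vlowI {ε : ℝ} (hε0 : 0 < ε) (hε1 : ε < 1) (hε0' : 0 ≤ ε) (s : ioc01) :
    minputI ε hε0 hε1 1 (vlowI ε hε0' 1 s) = s :=
  Subtype.ext (vinv_vlow_one hε0 s.2.1 s.2.2)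

lemma minputI_cut {ε : ℝ} (hε0 : 0 < ε) (hε1 : ε < 1) {t : unitInterval} {s : ioc01}
    (h : (s : ℝ) = hcut ε (t : ℝ)) : minputI ε hε0 hε1 t s = iocTop :=
  Subtype.ext (minput_at_hcut hε1 t.2.1 t.2.2 h)

lemma vlowI_zero {ε : ℝ} (hε0 : 0 ≤ ε) (s : ioc01) : vlowI ε hε0 0 s = s :=
  Subtype.ext vlow_t_zero

lemma afI_cut {ε : ℝ} (hε1 : ε < 1) {t : unitInterval} {s : ioc01}
    (h : (s : ℝ) = hcut ε (t : ℝ)) : afI ε hε1 s t = t := by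
  apply Subtype.ext
  show af ε (s : ℝ) (t : ℝ) = (t : ℝ)
  unfold af
  rw [h]
  have hne : (1:ℝ) - ε ≠ 0 := sub_ne_zero.mpr (ne_of_gt (by linarith : (1:ℝ) > ε))
  have h1 : 4*(1 - hcut ε (t:ℝ))/(1-ε) = 2*(t:ℝ) := by
    unfold hcut; field_simp; ring
  rw [h1]
  exact min_eq_left (by nlinarith [t.2.1])

lemma bfI_cut {ε : ℝ} {t : unitInterval} {s : ioc01}
    (hε1 : ε < 1) (h : (s : ℝ) = hcut ε (t : ℝ)) : bfI ε s t = 0 := by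
  apply Subtype.ext
  show bf ε (s : ℝ) (t : ℝ) = 0
  unfold bf
  rw [h]
  have hne : (1:ℝ) - ε ≠ 0 := sub_ne_zero.mpr (ne_of_gt (by linarith : (1:ℝ) > ε))
  have h1 : 4*(1 - hcut ε (t:ℝ))/(1-ε) = 2*(t:ℝ) := by
    unfold hcut; field_simp; ring
  rw [h1]
  rw [show 2*(t:ℝ) - 2*(t:ℝ) = 0 by ring, min_eq_right t.2.1, max_self]

lemma afI_top {ε : ℝ} (hε1 : ε < 1) (t : unitInterval) : afI ε hε1 iocTop t = 0 := by
  apply Subtype.ext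
  show af ε ((iocTop : ioc01) : ℝ) (t : ℝ) = 0
  unfold af
  norm_num [iocTop]
  exact t.2.1

lemma bfI_top {ε : ℝ} (t : unitInterval) : bfI ε iocTop t = t := by
  apply Subtype.ext
  show bf ε ((iocTop : ioc01) : ℝ) (t : ℝ) = (t : ℝ)
  unfold bf
  norm_num [iocTop]
  rw [min_eq_left (by nlinarith [t.2.1])]
  exact max_eq_right t.2.1

lemma bfI_one_sp {ε : ℝ} (s : ioc01) : bfI ε s 1 = spMap ε (s : ℝ) := by
  apply Subtype.ext
  show bf ε (s : ℝ) ((1 : unitInterval) : ℝ) = spf ε (s : ℝ)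
  unfold bf spf
  norm_num

lemma afI_one_high {ε : ℝ} (hε1 : ε < 1) {s : ioc01}
    (hd : 1 ≤ 4*(1-(s:ℝ))/(1-ε)) : afI ε hε1 s 1 = 1 := by
  apply Subtype.ext
  show af ε (s : ℝ) ((1 : unitInterval) : ℝ) = 1
  unfold af
  exact min_eq_left hd

lemma bfI_one_low {ε : ℝ} {s : ioc01}
    (hd : 4*(1-(s:ℝ))/(1-ε) ≤ 1) : bfI ε s 1 = 1 := by
  apply Subtype.ext
  show bf ε (s : ℝ) ((1 : unitInterval) : ℝ) = 1
  unfold bf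
  have c1 : ((1:unitInterval):ℝ) = 1 := rfl
  rw [c1]
  rw [show (2*(1:ℝ) - 4*(1-(s:ℝ))/(1-ε)) = 2 - 4*(1-(s:ℝ))/(1-ε) by norm_num]
  rw [min_eq_left (by linarith)]
  norm_num

lemma spMap_one_low {ε : ℝ} {s : ioc01}
    (hd : 4*(1-(s:ℝ))/(1-ε) ≤ 1) : spMap ε (s : ℝ) = 1 := by
  apply Subtype.ext
  show spf ε (s : ℝ) = 1
  unfold spf
  rw [min_eq_left (by linarith)]
  norm_num

section Maps

variable {X : Type*} [TopologicalSpace X]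

/-- The squeezed copy of a point (time 1 squeeze), subtype level. -/
noncomputable def hatMapI (ε : ℝ) (hε0 : 0 ≤ ε) : X × ioc01 → X × ioc01 := fun y =>
  (y.1, vlowI ε hε0 1 y.2)

/-- The low-region formula: the conjugate of `R` by the time-`t` vertical squeeze. -/
noncomputable def lowMap (R : (X × ioc01) × unitInterval → X × ioc01)
    (ε : ℝ) (hε0 : 0 < ε) (hε1 : ε < 1) :
    (X × ioc01) × unitInterval → X × ioc01 := fun q =>
  ((R ((q.1.1, minputI ε hε0 hε1 q.2 q.1.2), q.2)).1,
   vlowI ε (le_of_lt hε0) q.2 (R ((q.1.1, minputI ε hε0 hε1 q.2 q.1.2), q.2)).2)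

/-- The high-region formula: explicit spine motion built from `C'` and the top track of `R`. -/
noncomputable def highMap (R : (X × ioc01) × unitInterval → X × ioc01)
    (C' : X × unitInterval → X) (ε : ℝ) (hε1 : ε < 1) :
    (X × ioc01) × unitInterval → X × ioc01 := fun q =>
  (C' ((R ((q.1.1, iocTop), afI ε hε1 q.1.2 q.2)).1, bfI ε q.1.2 q.2), q.1.2)

end Maps

lemma spMap_cut {ε : ℝ} (hε1 : ε < 1) : spMap ε (hcut ε 1) = 0 := by
  apply Subtype.ext
  show spf ε (hcut ε 1) = 0
  have hne : (1:ℝ) - ε ≠ 0 := sub_ne_zero.mpr (ne_of_gt (by linarith : (1:ℝ) > ε))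
  have h1 : 4*(1 - hcut ε 1)/(1-ε) = 2 := by
    unfold hcut; field_simp; ring
  unfold spf
  rw [h1]
  rw [show (2:ℝ) - 2 = 0 by ring, min_eq_right zero_le_one, max_self]

/-- Lemma 3.2: a deformation retraction `R` of `X × (0,1]` onto `Y` which preserves the
top face `X × {1}` and contracts it to a point `(y₀,1)` can be modified, away from
`X × (0,ε]`, so as to restrict on the top face to any prescribed contraction `C'` of `X`
to any prescribed point `y'`. -/
theorem stmt0 (X : Type*) [TopologicalSpace X] [ContractibleSpace X]
    (Y : Set (X × ioc01)) (y₀ : X)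
    (R : (X × ioc01) × unitInterval → X × ioc01)
    (hRcont : Continuous R)
    (hR0 : ∀ p, R (p, 0) = p)
    (hR1 : ∀ p, R (p, 1) ∈ Y)
    (hRY : ∀ y ∈ Y, R (y, 1) = y)
    (hRtop : ∀ (x : X) (t : unitInterval), (R ((x, iocTop), t)).2 = iocTop)
    (hRcontr : ∀ x : X, R ((x, iocTop), 1) = (y₀, iocTop)) :
    ∀ (y' : X) (C' : X × unitInterval → X), Continuous C' →
      (∀ x, C' (x, 0) = x) → (∀ x, C' (x, 1) = y') →
      ∀ ε : ℝ, 0 < ε → ε < 1 →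
      ∃ (Y' : Set (X × ioc01)) (R' : (X × ioc01) × unitInterval → X × ioc01),
        Continuous R' ∧
        (∀ p, R' (p, 0) = p) ∧
        (∀ p, R' (p, 1) ∈ Y') ∧
        (∀ y ∈ Y', R' (y, 1) = y) ∧
        {p ∈ Y' | (p.2 : ℝ) ≤ ε} = {p ∈ Y | (p.2 : ℝ) ≤ ε} ∧
        (∀ (x : X) (t : unitInterval), (R' ((x, iocTop), t)).2 = iocTop) ∧
        (∀ (x : X) (t : unitInterval), R' ((x, iocTop), t) = (C' (x, t), iocTop)) := by
  intro y' C' hC'c hC'0 hC'1 ε hε0 hε1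
  classical
  have hε0' : (0:ℝ) ≤ ε := le_of_lt hε0
  have hcoe1 : ((1 : unitInterval) : ℝ) = 1 := rfl
  set lowF : (X × ioc01) × unitInterval → X × ioc01 := lowMap R ε hε0 hε1 with hlowF
  set highF : (X × ioc01) × unitInterval → X × ioc01 := highMap R C' ε hε1 with hhighF
  set R' : (X × ioc01) × unitInterval → X × ioc01 :=
    fun q => if (q.1.2 : ℝ) ≤ hcut ε (q.2 : ℝ) then lowF q else highF q with hR'def
  -- boundary agreement
  have hbd : ∀ q : (X × ioc01) × unitInterval,
      (q.1.2 : ℝ) = hcut ε (q.2 : ℝ) → lowF q = highF q := by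
    rintro ⟨⟨x, s⟩, t⟩ h
    simp only [hlowF, hhighF]
    unfold lowMap highMap
    dsimp only
    dsimp only at h
    rw [minputI_cut hε0 hε1 h, afI_cut hε1 h, bfI_cut hε1 h]
    rw [hRtop x t, hC'0]
    refine Prod.ext_iff.mpr ⟨rfl, Subtype.ext ?_⟩
    show vlow ε (t : ℝ) ((iocTop : ioc01) : ℝ) = (s : ℝ)
    rw [show ((iocTop : ioc01) : ℝ) = 1 from rfl, vlow_one hε1 t.2.1]
    exact h.symm
  -- continuity
  have hts : Continuous fun q : (X × ioc01) × unitInterval => ((q.2 : ℝ)) :=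
    continuous_subtype_val.comp continuous_snd
  have hss : Continuous fun q : (X × ioc01) × unitInterval => ((q.1.2 : ℝ)) :=
    continuous_subtype_val.comp (continuous_snd.comp continuous_fst)
  have hhc : Continuous fun q : (X × ioc01) × unitInterval => hcut ε (q.2 : ℝ) := by
    unfold hcut
    exact continuous_const.sub ((hts.mul continuous_const).div_const 2)
  have hdne : ∀ q : (X × ioc01) × unitInterval, (1 - (q.2 : ℝ)/2) ≠ 0 := by
    intro q hq
    have h2 : ((q.2 : ℝ)) ≤ 1 := q.2.2.2
    linarith
  have hminc : Continuous fun q : (X × ioc01) × unitInterval =>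
      minput ε (q.2 : ℝ) (q.1.2 : ℝ) := by
    unfold minput vinv
    have h1 : Continuous fun q : (X × ioc01) × unitInterval =>
        min ((q.1.2 : ℝ)) (hcut ε (q.2 : ℝ)) := hss.min hhc
    exact h1.max ((h1.sub ((hts.mul continuous_const).div_const 2)).div
      (continuous_const.sub (hts.div_const 2)) hdne)
  have hinner : Continuous fun q : (X × ioc01) × unitInterval =>
      ((q.1.1, minputI ε hε0 hε1 q.2 q.1.2), q.2) := by
    refine Continuous.prodMk (Continuous.prodMk ?_ ?_) continuous_snd
    · exact continuous_fst.comp continuous_fst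
    · unfold minputI
      exact hminc.subtype_mk _
  have hlowc : Continuous lowF := by
    rw [hlowF]; unfold lowMap
    have hσ : Continuous fun q : (X × ioc01) × unitInterval =>
        (((R ((q.1.1, minputI ε hε0 hε1 q.2 q.1.2), q.2)).2 : ℝ)) :=
      continuous_subtype_val.comp (continuous_snd.comp (hRcont.comp hinner))
    refine Continuous.prodMk ?_ ?_
    · exact continuous_fst.comp (hRcont.comp hinner)
    · unfold vlowI
      refine Continuous.subtype_mk ?_ _
      unfold vlow
      exact hσ.min (((continuous_const.sub (hts.div_const 2)).mul hσ).add
        ((hts.mul continuous_const).div_const 2))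
  have hafc : Continuous fun q : (X × ioc01) × unitInterval =>
      af ε (q.1.2 : ℝ) (q.2 : ℝ) := by
    unfold af
    exact hts.min ((continuous_const.mul (continuous_const.sub hss)).div_const (1-ε))
  have hbfc : Continuous fun q : (X × ioc01) × unitInterval =>
      bf ε (q.1.2 : ℝ) (q.2 : ℝ) := by
    unfold bf
    exact continuous_const.max (hts.min ((continuous_const.mul hts).sub
      ((continuous_const.mul (continuous_const.sub hss)).div_const (1-ε))))
  have hinner2 : Continuous fun q : (X × ioc01) × unitInterval =>
      ((q.1.1, iocTop), afI ε hε1 q.1.2 q.2) := by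
    refine Continuous.prodMk (Continuous.prodMk ?_ continuous_const) ?_
    · exact continuous_fst.comp continuous_fst
    · unfold afI
      exact hafc.subtype_mk _
  have hhighc : Continuous highF := by
    rw [hhighF]; unfold highMap
    refine Continuous.prodMk ?_ (continuous_snd.comp continuous_fst)
    refine hC'c.comp (Continuous.prodMk ?_ ?_)
    · exact continuous_fst.comp (hRcont.comp hinner2)
    · unfold bfI
      exact hbfc.subtype_mk _
  have hRcont' : Continuous R' := by
    rw [hR'def]
    exact Continuous.if_le hlowc hhighc hss hhc hbd
  -- identity at time 0
  have hid : ∀ p : X × ioc01, R' (p, 0) = p := by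
    rintro ⟨x, s⟩
    have hcond : ((s : ℝ)) ≤ hcut ε ((0 : unitInterval) : ℝ) := by
      have h1 : hcut ε ((0 : unitInterval) : ℝ) = 1 := by
        show hcut ε 0 = 1
        unfold hcut; ring
      rw [h1]; exact s.2.2
    simp only [hR'def]
    rw [if_pos hcond]
    simp only [hlowF]
    unfold lowMap
    dsimp only
    rw [minputI_zero hε0 hε1 s, hR0 (x, s)]
    dsimp only
    rw [vlowI_zero hε0' s]
  -- the prescribed top behaviour
  have htopC : ∀ (x : X) (t : unitInterval), R' ((x, iocTop), t) = (C' (x, t), iocTop) := by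
    intro x t
    by_cases hcond : (((iocTop : ioc01) : ℝ)) ≤ hcut ε (t : ℝ)
    · have ht0 : t = 0 := by
        apply Subtype.ext
        show (t : ℝ) = 0
        have h1 : (1:ℝ) ≤ hcut ε (t:ℝ) := hcond
        have h2 : (0:ℝ) ≤ (t:ℝ) := t.2.1
        unfold hcut at h1
        nlinarith
      rw [ht0, hid (x, iocTop), hC'0]
    · simp only [hR'def]
      rw [if_neg hcond]
      simp only [hhighF]
      unfold highMap
      dsimp only
      rw [afI_top hε1 t, hR0 (x, iocTop)]
      dsimp only
      rw [bfI_top t]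
  refine ⟨(hatMapI ε hε0' '' Y) ∪
      {p : X × ioc01 | hcut ε 1 ≤ (p.2 : ℝ) ∧ p.1 = C' (y₀, spMap ε (p.2 : ℝ))},
    R', hRcont', hid, ?_, ?_, ?_, ?_, fun x t => by rw [htopC x t]⟩
  · -- lands in Y'
    rintro ⟨x, s⟩
    simp only [hR'def]
    by_cases hcond : ((s : ℝ)) ≤ hcut ε ((1 : unitInterval) : ℝ)
    · rw [if_pos hcond]
      simp only [hlowF]
      unfold lowMap
      dsimp only
      exact Or.inl ⟨R ((x, minputI ε hε0 hε1 1 s), 1), hR1 _, rfl⟩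
    · rw [if_neg hcond]
      simp only [hhighF]
      unfold highMap
      dsimp only
      refine Or.inr ⟨?_, ?_⟩
      · exact le_of_lt (not_le.mp hcond)
      · show C' ((R ((x, iocTop), afI ε hε1 s 1)).1, bfI ε s 1) = C' (y₀, spMap ε (s : ℝ))
        rcases le_total (4*(1-(s:ℝ))/(1-ε)) 1 with hd | hd
        · rw [bfI_one_low hd, spMap_one_low hd, hC'1, hC'1]
        · rw [afI_one_high hε1 hd, hRcontr x]
          dsimp only
          rw [bfI_one_sp]
  · -- fixes Y'
    rintro p (⟨w, hw, rfl⟩ | ⟨hp1, hp2⟩)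
    · simp only [hatMapI, hR'def]
      rw [hcoe1]
      have hcond : ((vlowI ε hε0' 1 w.2 : ioc01) : ℝ) ≤ hcut ε 1 := vlow_le_hcut_one w.2.2.2
      rw [if_pos hcond]
      simp only [hlowF]
      unfold lowMap
      dsimp only
      rw [minputI_vlowI hε0 hε1 hε0' w.2, Prod.mk.eta, hRY w hw]
    · simp only [hR'def]
      rw [hcoe1]
      rcases eq_or_lt_of_le hp1 with heq | hlt
      · have hcond : ((p.2 : ℝ)) ≤ hcut ε 1 := le_of_eq heq.symm
        rw [if_pos hcond]
        simp only [hlowF]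
        unfold lowMap
        dsimp only
        rw [minputI_cut hε0 hε1 heq.symm, hRcontr p.1]
        dsimp only
        rw [← heq, spMap_cut hε1, hC'0] at hp2
        refine Prod.ext_iff.mpr ⟨hp2.symm, Subtype.ext ?_⟩
        show vlow ε ((1 : unitInterval) : ℝ) ((iocTop : ioc01) : ℝ) = ((p.2 : ioc01) : ℝ)
        rw [show ((iocTop : ioc01) : ℝ) = 1 from rfl,
          show (((1 : unitInterval)) : ℝ) = 1 from rfl, vlow_one hε1 zero_le_one]
        exact heq
      · rw [if_neg (not_le.mpr hlt)]
        simp only [hhighF]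
        unfold highMap
        dsimp only
        refine Prod.ext_iff.mpr ⟨?_, rfl⟩
        show C' ((R ((p.1, iocTop), afI ε hε1 p.2 1)).1, bfI ε p.2 1) = p.1
        rcases le_total (4*(1-(p.2:ℝ))/(1-ε)) 1 with hd | hd
        · rw [bfI_one_low hd, hC'1, hp2, spMap_one_low hd, hC'1]
        · rw [afI_one_high hε1 hd, hRcontr p.1]
          dsimp only
          rw [bfI_one_sp, hp2]
  · -- the ε-condition
    ext p
    constructor
    · rintro ⟨(⟨w, hw, rfl⟩ | ⟨hp1, _⟩), hle⟩
      · have hw2 : ((w.2 : ℝ)) ≤ ε := by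
          by_contra hgt
          push_neg at hgt
          exact absurd hle (not_le.mpr (vlow_gt_eps le_rfl hgt))
        have h2 : hatMapI ε hε0' w = w :=
          Prod.ext_iff.mpr ⟨rfl, Subtype.ext (vlow_id_low zero_le_one hw2)⟩
        rw [h2] at hle ⊢
        exact ⟨hw, hle⟩
      · exfalso
        rw [hcut_one] at hp1
        linarith
    · rintro ⟨hpY, hle⟩
      refine ⟨Or.inl ⟨p, hpY, ?_⟩, hle⟩
      exact Prod.ext_iff.mpr ⟨rfl, Subtype.ext (vlow_id_low zero_le_one hle)⟩
  · -- stays in the top face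
    intro x t
    rw [htopC x t]
end

section
/- Let Q be a finite connected quiver whose underlying undirected graph is a tree. Then there exists a function g : ℤ × Q₀ → ℤ such that (i) g(m,i) = g(m−1,i) + 2 for all m ∈ ℤ and i ∈ Q₀, and (ii) g is strictly increasing along every arrow of the translation quiver ℤQ, i.e. for every arrow i → j of Q and every m ∈ ℤ one has g(m,i) < g(m,j) and g(m−1,j) < g(m,i). Moreover g is unique up to an additive constant: if g and g' both satisfy (i) and (ii), then g − g' is a constant function. -/
/-- The underlying undirected simple graph of a quiver with arrow relation `A`. -/
def underlyingGraph {V : Type*} (A : V → V → Prop) : SimpleGraph V where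
  Adj i j := i ≠ j ∧ (A i j ∨ A j i)
  symm := ⟨fun i j h => ⟨h.1.symm, h.2.symm⟩⟩
  loopless := ⟨fun i h => h.1 rfl⟩

def IsPositionFunction {V : Type*} (A : V → V → Prop) (g : ℤ × V → ℤ) : Prop :=
  (∀ (m : ℤ) (i : V), g (m, i) = g (m - 1, i) + 2) ∧
  (∀ i j, A i j → ∀ m : ℤ, g (m, i) < g (m, j) ∧ g (m - 1, j) < g (m, i))

open Classical in
/-- signed value of a walk in the underlying graph -/
noncomputable def wval {V : Type*} (A : V → V → Prop) {u v : V}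
    (p : (underlyingGraph A).Walk u v) : ℤ :=
  (p.darts.map fun d => if A d.toProd.1 d.toProd.2 then (1 : ℤ) else -1).sum

lemma wval_append {V : Type*} (A : V → V → Prop) {u v w : V}
    (p : (underlyingGraph A).Walk u v) (q : (underlyingGraph A).Walk v w) :
    wval A (p.append q) = wval A p + wval A q := by
  simp [wval, SimpleGraph.Walk.darts_append]

/-- Key: there is an "exponent" function with f j = f i + 1 along each arrow. -/
lemma exists_exponent {V : Type*} (A : V → V → Prop)
    (hnoloop : ∀ i, ¬ A i i)
    (hno2cycle : ∀ i j, A i j → ¬ A j i)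
    (htree : (underlyingGraph A).IsTree) :
    ∃ f : V → ℤ, ∀ i j, A i j → f j = f i + 1 := by
  classical
  obtain ⟨⟨r⟩, hu⟩ := (SimpleGraph.isTree_iff_existsUnique_path).1 htree
  set G := underlyingGraph A with hG
  -- unique path from r to v
  let P : ∀ v, G.Walk r v := fun v => (hu r v).choose
  have hP : ∀ v, (P v).IsPath := fun v => (hu r v).choose_spec.1
  have hPuniq : ∀ v (q : G.Walk r v), q.IsPath → q = P v := by
    intro v q hq
    exact ((hu r v).choose_spec.2 q hq)
  refine ⟨fun v => wval A (P v), ?_⟩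
  intro i j hij
  show wval A (P j) = wval A (P i) + 1
  have hadj : G.Adj i j := ⟨fun h => hnoloop i (h ▸ hij), Or.inl hij⟩
  by_cases hj : j ∈ (P i).support
  · -- then P i = (P j).append (single edge j→i)
    have hsp := ((P i).take_spec hj).symm
    have htk : ((P i).takeUntil j hj).IsPath := (hP i).takeUntil hj
    have hdr : ((P i).dropUntil j hj).IsPath := (hP i).dropUntil hj
    have h1 : (P i).takeUntil j hj = P j := hPuniq j _ htk
    have h2 : (P i).dropUntil j hj = (SimpleGraph.Path.singleton hadj.symm : G.Path j i).1 := by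
      have := (hu j i).unique hdr (SimpleGraph.Path.singleton hadj.symm).2
      exact this
    have : wval A (P i) = wval A (P j) + wval A ((P i).dropUntil j hj) := by
      rw [← h1, ← wval_append, ← hsp]
    rw [h2] at this
    have hsing : wval A ((SimpleGraph.Path.singleton hadj.symm : G.Path j i).1) = -1 := by
      simp [wval, SimpleGraph.Path.singleton, hno2cycle i j hij]
    rw [hsing] at this
    omega
  · -- then (P i).concat edge is the path P j
    have hcp : ((P i).concat hadj).IsPath := by
      rw [← SimpleGraph.Walk.isPath_reverse_iff]
      have : ((P i).concat hadj).reverse = SimpleGraph.Walk.cons hadj.symm (P i).reverse := by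
        rw [SimpleGraph.Walk.concat_eq_append, SimpleGraph.Walk.reverse_append]
        simp
      rw [this, SimpleGraph.Walk.cons_isPath_iff]
      refine ⟨(SimpleGraph.Walk.isPath_reverse_iff _).2 (hP i), ?_⟩
      rw [SimpleGraph.Walk.support_reverse, List.mem_reverse]
      exact hj
    have h1 : (P i).concat hadj = P j := hPuniq j _ hcp
    have : wval A ((P i).concat hadj) = wval A (P i) + 1 := by
      rw [SimpleGraph.Walk.concat_eq_append, wval_append]
      simp [wval, hij]
    rw [h1] at this
    omega

/-- Definition/Lemma 2.8: for a finite connected quiver whose underlying graph is a tree,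
a position function on `ℤQ` exists and is unique up to an additive constant. -/
theorem stmt3 {V : Type*} [Fintype V] (A : V → V → Prop)
    (hnoloop : ∀ i, ¬ A i i)
    (hno2cycle : ∀ i j, A i j → ¬ A j i)
    (htree : (underlyingGraph A).IsTree) :
    (∃ g : ℤ × V → ℤ, IsPositionFunction A g) ∧
    (∀ g g' : ℤ × V → ℤ, IsPositionFunction A g → IsPositionFunction A g' →
      ∃ cst : ℤ, ∀ p : ℤ × V, g p = g' p + cst) := by
  constructor
  · obtain ⟨f, hf⟩ := exists_exponent A hnoloop hno2cycle htree
    refine ⟨fun p => 2 * p.1 + f p.2, ?_, ?_⟩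
    · intro m i; ring
    · intro i j hij m
      have := hf i j hij
      constructor <;> simp only [] <;> omega
  · rintro g g' ⟨hg1, hg2⟩ ⟨hg'1, hg'2⟩
    obtain ⟨⟨r⟩, hu⟩ := (SimpleGraph.isTree_iff_existsUnique_path).1 htree
    -- g(m,v) = g(0,v) + 2m
    have key : ∀ (g : ℤ × V → ℤ), (∀ (m : ℤ) (i : V), g (m, i) = g (m - 1, i) + 2) →
        ∀ (m : ℤ) (i : V), g (m, i) = g (0, i) + 2 * m := by
      intro g hg m i
      induction m using Int.induction_on with
      | zero => simp
      | succ k ih =>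
        have := hg (k + 1) i
        simp only [add_sub_cancel_right] at this
        omega
      | pred k ih =>
        have h1 := hg (-k) i
        have h2 : g (-(k:ℤ) - 1, i) = g (-((k:ℤ)+1), i) :=
          congrArg (fun t => g (t, i)) (by ring)
        omega
    -- along an arrow, g(0,j) = g(0,i) + 1
    have step : ∀ (g : ℤ × V → ℤ), IsPositionFunction A g →
        ∀ i j, A i j → g (0, j) = g (0, i) + 1 := by
      rintro g ⟨hg1, hg2⟩ i j hij
      have h1 := (hg2 i j hij 0).1
      have h2 := (hg2 i j hij 0).2
      have h3 := hg1 0 j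
      omega
    -- d constant along walks
    have dconst : ∀ v, g (0, v) - g' (0, v) = g (0, r) - g' (0, r) := by
      intro v
      obtain ⟨p, -⟩ := hu r v
      induction p with
      | nil => rfl
      | cons h q ih =>
        rename_i x y z
        have hstep : g (0, y) - g' (0, y) = g (0, x) - g' (0, x) := by
          rcases h.2 with h' | h'
          · have := step g ⟨hg1, hg2⟩ x y h'
            have := step g' ⟨hg'1, hg'2⟩ x y h'
            omega
          · have := step g ⟨hg1, hg2⟩ y x h'
            have := step g' ⟨hg'1, hg'2⟩ y x h'
            omega
        omega
    refine ⟨g (0, r) - g' (0, r), ?_⟩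
    rintro ⟨m, v⟩
    have := key g hg1 m v
    have := key g' hg'1 m v
    have := dconst v
    omega
end

section
/- Let H = { m·e^{iπφ} ∈ ℂ : m ∈ ℝ_{>0}, 0 ≤ φ < 1 } (the open upper half-plane together with the positive real axis), and for z ∈ H let μ(z) ∈ [0,1) denote the unique φ with z = |z|·e^{iπφ}. Then there do not exist complex numbers z₁, z₂, z₃, z₄ ∈ H such that, setting P₁ = z₁, P₂ = z₁+z₂, P₃ = z₁+z₃, P₄ = z₁+z₄, M₂ = z₁+z₃+z₄, M₃ = z₁+z₂+z₄, M₄ = z₁+z₂+z₃, I₁ = z₁+z₂+z₃+z₄ and M₁ = I₁+z₁ (all of which automatically lie in H), the phases satisfy the strict chain of inequalities μ(z₂) > μ(z₃) > μ(z₄) > μ(I₁) > μ(M₃) > μ(M₄) > μ(M₂) > μ(M₁) > μ(P₂) > μ(P₃) > μ(P₄) > μ(P₁). -/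
open Complex

/-- The upper half-plane together with the positive real axis:
`H = { m e^{iπφ} : m > 0, 0 ≤ φ < 1 }`. -/
def Hset : Set ℂ :=
  {z | ∃ m : ℝ, 0 < m ∧ ∃ φ : ℝ, 0 ≤ φ ∧ φ < 1 ∧
    z = (m : ℂ) * Complex.exp ((φ : ℂ) * (Real.pi : ℂ) * Complex.I)}

/-- The phase `μ(z) ∈ [0,1)` of `z ∈ H`, i.e. the unique `φ` with `z = |z| e^{iπφ}`;
for `z ∈ H` it equals `arg z / π`. -/
noncomputable def phaseH (z : ℂ) : ℝ := Complex.arg z / Real.pi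

def UH (z : ℂ) : Prop := 0 < z.im ∨ (z.im = 0 ∧ 0 < z.re)

lemma UH_of_mem {z : ℂ} (h : z ∈ Hset) : UH z := by
  obtain ⟨m, hm, φ, hφ0, hφ1, rfl⟩ := h
  have hexp : Complex.exp ((φ : ℂ) * (Real.pi : ℂ) * Complex.I)
      = Complex.cos ((φ * Real.pi : ℝ) : ℂ) + Complex.sin ((φ * Real.pi : ℝ) : ℂ) * Complex.I := by
    rw [← Complex.exp_mul_I]; push_cast; ring_nf
  have hre : ((m:ℂ) * Complex.exp ((φ : ℂ) * (Real.pi : ℂ) * Complex.I)).re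
      = m * Real.cos (φ * Real.pi) := by
    rw [hexp, ← Complex.ofReal_cos, ← Complex.ofReal_sin]
    simp [Complex.mul_re, Complex.mul_im, ← Complex.ofReal_mul, Complex.cos_ofReal_re,
      Complex.cos_ofReal_im, Complex.sin_ofReal_re, Complex.sin_ofReal_im]
  have him : ((m:ℂ) * Complex.exp ((φ : ℂ) * (Real.pi : ℂ) * Complex.I)).im
      = m * Real.sin (φ * Real.pi) := by
    rw [hexp, ← Complex.ofReal_cos, ← Complex.ofReal_sin]
    simp [Complex.mul_re, Complex.mul_im, ← Complex.ofReal_mul, Complex.cos_ofReal_re,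
      Complex.cos_ofReal_im, Complex.sin_ofReal_re, Complex.sin_ofReal_im]
  rcases eq_or_lt_of_le hφ0 with h0 | h0
  · right
    constructor
    · rw [him, ← h0]; simp
    · rw [hre, ← h0]; simpa using hm
  · left
    rw [him]
    have : 0 < Real.sin (φ * Real.pi) := by
      apply Real.sin_pos_of_pos_of_lt_pi
      · positivity
      · nlinarith [Real.pi_pos]
    exact mul_pos hm this

lemma UH.add {y z : ℂ} (hy : UH y) (hz : UH z) : UH (y + z) := by
  rcases hy with hy | ⟨hy1, hy2⟩ <;> rcases hz with hz | ⟨hz1, hz2⟩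
  · left; simp [Complex.add_im]; linarith
  · left; simp [Complex.add_im, hz1]; linarith
  · left; simp [Complex.add_im, hy1]; linarith
  · right; simp [Complex.add_im, Complex.add_re, hy1, hz1]; linarith

lemma UH.ne_zero {z : ℂ} (hz : UH z) : z ≠ 0 := by
  rintro rfl
  rcases hz with hz | ⟨_, hz2⟩ <;> simp_all

lemma UH.arg_nonneg {z : ℂ} (hz : UH z) : 0 ≤ Complex.arg z := by
  rw [Complex.arg_nonneg_iff]
  rcases hz with hz | ⟨hz1, _⟩ <;> linarith

lemma UH.arg_lt_pi {z : ℂ} (hz : UH z) : Complex.arg z < Real.pi := by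
  rcases lt_or_eq_of_le (Complex.arg_le_pi z) with h | h
  · exact h
  · exfalso
    rw [Complex.arg_eq_pi_iff] at h
    rcases hz with hz | ⟨hz1, hz2⟩ <;> [linarith [h.2 ▸ hz]; linarith]

lemma cross_eq {y z : ℂ} (hy : y ≠ 0) (hz : z ≠ 0) :
    y.re * z.im - y.im * z.re
      = ‖y‖ * ‖z‖ * Real.sin (Complex.arg z - Complex.arg y) := by
  have hya : (‖y‖ : ℝ) ≠ 0 := by simpa using hy
  have hza : (‖z‖ : ℝ) ≠ 0 := by simpa using hz
  have h1 : y.re = ‖y‖ * Real.cos (Complex.arg y) := by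
    rw [Complex.cos_arg hy]; field_simp
  have h2 : y.im = ‖y‖ * Real.sin (Complex.arg y) := by
    rw [Complex.sin_arg]; field_simp
  have h3 : z.re = ‖z‖ * Real.cos (Complex.arg z) := by
    rw [Complex.cos_arg hz]; field_simp
  have h4 : z.im = ‖z‖ * Real.sin (Complex.arg z) := by
    rw [Complex.sin_arg]; field_simp
  rw [h1, h2, h3, h4, Real.sin_sub]
  ring

lemma phase_lt_iff {y z : ℂ} (hy : UH y) (hz : UH z) :
    phaseH y < phaseH z ↔ 0 < y.re * z.im - y.im * z.re := by
  have hpi := Real.pi_pos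
  have habs : 0 < ‖y‖ * ‖z‖ := by
    exact mul_pos (norm_pos_iff.mpr hy.ne_zero) (norm_pos_iff.mpr hz.ne_zero)
  rw [phaseH, phaseH, div_lt_div_iff_of_pos_right hpi, cross_eq hy.ne_zero hz.ne_zero]
  constructor
  · intro h
    have hs : 0 < Real.sin (Complex.arg z - Complex.arg y) := by
      apply Real.sin_pos_of_pos_of_lt_pi
      · linarith
      · linarith [hy.arg_nonneg, hz.arg_lt_pi]
    exact mul_pos habs hs
  · intro h
    by_contra hle
    push_neg at hle
    have hs : Real.sin (Complex.arg z - Complex.arg y) ≤ 0 := by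
      apply Real.sin_nonpos_of_nonpos_of_neg_pi_le
      · linarith [hz.arg_nonneg, hy.arg_lt_pi]
      · linarith [hz.arg_nonneg, hy.arg_lt_pi]
    nlinarith
/-- Counterexample 8.15: there is no stability function (given by central charges
`z₁, z₂, z₃, z₄ ∈ H` of the four simples of the `D₄` quiver) inducing the longest
directed path `I₂·I₃·I₄·I₁·M₃·M₄·M₂·M₁·P₂·P₃·P₄·P₁`, i.e. making the phases of the
twelve indecomposables strictly decrease along that order. -/
theorem stmt6 :
    ¬ ∃ z₁ z₂ z₃ z₄ : ℂ,
      z₁ ∈ Hset ∧ z₂ ∈ Hset ∧ z₃ ∈ Hset ∧ z₄ ∈ Hset ∧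
      phaseH z₂ > phaseH z₃ ∧
      phaseH z₃ > phaseH z₄ ∧
      phaseH z₄ > phaseH (z₁ + z₂ + z₃ + z₄) ∧
      phaseH (z₁ + z₂ + z₃ + z₄) > phaseH (z₁ + z₂ + z₄) ∧
      phaseH (z₁ + z₂ + z₄) > phaseH (z₁ + z₂ + z₃) ∧
      phaseH (z₁ + z₂ + z₃) > phaseH (z₁ + z₃ + z₄) ∧
      phaseH (z₁ + z₃ + z₄) > phaseH (2 * z₁ + z₂ + z₃ + z₄) ∧
      phaseH (2 * z₁ + z₂ + z₃ + z₄) > phaseH (z₁ + z₂) ∧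
      phaseH (z₁ + z₂) > phaseH (z₁ + z₃) ∧
      phaseH (z₁ + z₃) > phaseH (z₁ + z₄) ∧
      phaseH (z₁ + z₄) > phaseH z₁ := by
  rintro ⟨z₁, z₂, z₃, z₄, hz₁, hz₂, hz₃, hz₄, h23, h34, h4S, hSM3, hM34, hM42,
    hM2M1, hM1P2, hP23, hP34, hP41⟩
  have u₁ := UH_of_mem hz₁
  have u₂ := UH_of_mem hz₂
  have u₃ := UH_of_mem hz₃
  have u₄ := UH_of_mem hz₄
  have uP2 : UH (z₁ + z₂) := u₁.add u₂
  have uP3 : UH (z₁ + z₃) := u₁.add u₃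
  have uP4 : UH (z₁ + z₄) := u₁.add u₄
  have uM3 : UH (z₁ + z₂ + z₄) := uP2.add u₄
  have uM4 : UH (z₁ + z₂ + z₃) := uP2.add u₃
  have hA : phaseH (z₁ + z₂) < phaseH z₃ := by linarith
  have hp : phaseH z₁ < phaseH z₃ := by linarith
  have cD := (phase_lt_iff u₄ u₃).1 h34
  have cE := (phase_lt_iff uM4 uM3).1 hM34
  have cI := (phase_lt_iff uP3 uP2).1 hP23
  have cJ := (phase_lt_iff uP4 uP3).1 hP34
  have cA := (phase_lt_iff uP2 u₃).1 hA
  have cp := (phase_lt_iff u₁ u₃).1 hp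
  simp only [Complex.add_re, Complex.add_im] at cD cE cI cJ cA cp
  nlinarith [mul_pos cA cJ, mul_pos cp cE, mul_pos cD cI, mul_pos cp cD]
end

section
/- Let H = { m·e^{iπφ} ∈ ℂ : m ∈ ℝ_{>0}, 0 ≤ φ < 1 }, and for z ∈ H let μ(z) ∈ [0,1) denote the unique φ with z = |z|·e^{iπφ}. For integers a, c, b with 1 ≤ a ≤ c < b, the complex numbers z_{a,c} = Σ_{j=a}^{c} (−j + i) and z_{a,b} = Σ_{j=a}^{b} (−j + i) lie in H and satisfy μ(z_{a,c}) < μ(z_{a,b}). -/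
open Complex

lemma mem_Hset_of_im_pos {z : ℂ} (hz : 0 < z.im) : z ∈ Hset := by
  have hz0 : z ≠ 0 := by intro h; rw [h] at hz; simp at hz
  refine ⟨‖z‖, norm_pos_iff.mpr hz0, Complex.arg z / Real.pi, ?_, ?_, ?_⟩
  · exact div_nonneg (Complex.arg_nonneg_iff.mpr hz.le) Real.pi_pos.le
  · have h1 : Complex.arg z < Real.pi := by
      rcases lt_or_eq_of_le (Complex.arg_le_pi z) with h | h
      · exact h
      · exact absurd ((Complex.arg_eq_pi_iff.mp h).2) (by linarith)
    exact (div_lt_one Real.pi_pos).mpr h1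
  · rw [Complex.ofReal_div]
    rw [div_mul_cancel₀ _ (by exact_mod_cast Real.pi_pos.ne')]
    exact (Complex.norm_mul_exp_arg_mul_I z).symm

lemma gauss_sum (a : ℤ) : ∀ c : ℤ, a ≤ c →
    2 * ∑ j ∈ Finset.Icc a c, j = (c - a + 1) * (a + c) := by
  intro c
  refine Int.le_induction (motive := fun c _ => 2 * ∑ j ∈ Finset.Icc a c, j = (c - a + 1) * (a + c)) ?_ ?_ c
  · show 2 * ∑ j ∈ Finset.Icc a a, j = (a - a + 1) * (a + a)
    rw [Finset.Icc_self, Finset.sum_singleton]; ring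
  · intro n _ ih
    have hins : Finset.Icc a (n + 1) = insert (n + 1) (Finset.Icc a n) := by
      ext x; simp only [Finset.mem_Icc, Finset.mem_insert]; omega
    rw [hins, Finset.sum_insert (by simp only [Finset.mem_Icc]; omega), mul_add, ih]
    ring

lemma sum_eval (a c : ℤ) (h : a ≤ c) :
    (∑ j ∈ Finset.Icc a c, (-(j : ℂ) + Complex.I)) =
      (-(∑ j ∈ Finset.Icc a c, j : ℤ) : ℂ) + ((c - a + 1 : ℤ) : ℂ) * Complex.I := by
  rw [Finset.sum_add_distrib, Finset.sum_const]
  have hcard : ((Finset.Icc a c).card : ℤ) = c - a + 1 := by rw [Int.card_Icc]; omega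
  rw [Finset.sum_neg_distrib]
  push_cast [← hcard]
  ring

lemma arg_lt_arg_aux {S1 n1 S2 n2 : ℝ} (hS1 : 0 < S1) (hn1 : 0 < n1)
    (hS2 : 0 < S2) (hn2 : 0 < n2) (hkey : n2 * S1 < n1 * S2) :
    Complex.arg ((-S1 : ℂ) + (n1 : ℂ) * Complex.I) <
      Complex.arg ((-S2 : ℂ) + (n2 : ℂ) * Complex.I) := by
  set z1 : ℂ := (-S1 : ℂ) + (n1 : ℂ) * Complex.I with hz1
  set z2 : ℂ := (-S2 : ℂ) + (n2 : ℂ) * Complex.I with hz2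
  have hre1 : z1.re = -S1 := by simp [hz1]
  have him1 : z1.im = n1 := by simp [hz1]
  have hre2 : z2.re = -S2 := by simp [hz2]
  have him2 : z2.im = n2 := by simp [hz2]
  have habs1 : 0 < ‖z1‖ := by
    apply norm_pos_iff.mpr; intro h; rw [Complex.ext_iff] at h
    simp [hre1] at h; linarith [h.1]
  have habs2 : 0 < ‖z2‖ := by
    apply norm_pos_iff.mpr; intro h; rw [Complex.ext_iff] at h
    simp [hre2] at h; linarith [h.1]
  rw [Complex.arg_of_re_neg_of_im_nonneg (by rw [hre1]; linarith) (by rw [him1]; linarith),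
      Complex.arg_of_re_neg_of_im_nonneg (by rw [hre2]; linarith) (by rw [him2]; linarith)]
  have hnegim1 : (-z1).im = -n1 := by simp [him1]
  have hnegim2 : (-z2).im = -n2 := by simp [him2]
  rw [hnegim1, hnegim2]
  apply add_lt_add_left
  have hmemle : ∀ (n : ℝ) (z : ℂ), 0 < ‖z‖ → z.im = n → 0 < n →
      (-n) / ‖z‖ ∈ Set.Icc (-1 : ℝ) 1 := by
    intro n z habs him hn
    have h := Complex.abs_im_le_norm z
    rw [him] at h
    rw [abs_of_pos hn] at h
    constructor
    · rw [le_div_iff₀ habs]; linarith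
    · apply div_le_one_of_le₀ <;> linarith
  apply Real.strictMonoOn_arcsin (hmemle n1 z1 habs1 him1 hn1) (hmemle n2 z2 habs2 him2 hn2)
  -- need: -n1 / abs z1 < -n2 / abs z2, i.e. n2/abs2 < n1/abs1, i.e. n2*abs1 < n1*abs2
  rw [div_lt_div_iff₀ habs1 habs2, neg_mul, neg_mul, neg_lt_neg_iff]
  -- goal : n2 * abs z1 < n1 * abs z2
  apply lt_of_pow_lt_pow_left₀ 2 (by positivity)
  rw [mul_pow, mul_pow, Complex.sq_norm, Complex.sq_norm]
  rw [Complex.normSq_apply, Complex.normSq_apply, hre1, him1, hre2, him2]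
  have hsq : (n2 * S1) ^ 2 < (n1 * S2) ^ 2 := by
    have h1 : 0 < n2 * S1 := mul_pos hn2 hS1
    nlinarith
  nlinarith [hsq]

/-- The inequality behind Reineke's totally stable stability function on the `A_n`
quiver `n → n-1 → ⋯ → 1` with `Z(S_j) = -j + i`: for `1 ≤ a ≤ c < b`, the central
charges `z_{a,c} = Σ_{j=a}^{c} (-j + i)` and `z_{a,b} = Σ_{j=a}^{b} (-j + i)` lie in `H`
and `μ(z_{a,c}) < μ(z_{a,b})`. -/
theorem stmt7 (a c b : ℤ) (ha : 1 ≤ a) (hac : a ≤ c) (hcb : c < b) :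
    (∑ j ∈ Finset.Icc a c, (-(j : ℂ) + Complex.I)) ∈ Hset ∧
    (∑ j ∈ Finset.Icc a b, (-(j : ℂ) + Complex.I)) ∈ Hset ∧
    phaseH (∑ j ∈ Finset.Icc a c, (-(j : ℂ) + Complex.I)) <
      phaseH (∑ j ∈ Finset.Icc a b, (-(j : ℂ) + Complex.I)) := by
  have hab : a ≤ b := hac.trans hcb.le
  set S1 : ℤ := ∑ j ∈ Finset.Icc a c, j with hS1
  set S2 : ℤ := ∑ j ∈ Finset.Icc a b, j with hS2
  set n1 : ℤ := c - a + 1 with hn1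
  set n2 : ℤ := b - a + 1 with hn2
  have hg1 : 2 * S1 = n1 * (a + c) := gauss_sum a c hac
  have hg2 : 2 * S2 = n2 * (a + b) := gauss_sum a b hab
  have hn1pos : 0 < n1 := by omega
  have hn2pos : 0 < n2 := by omega
  have hS1pos : 0 < S1 := by nlinarith [mul_pos hn1pos (show (0:ℤ) < a + c by omega)]
  have hS2pos : 0 < S2 := by nlinarith [mul_pos hn2pos (show (0:ℤ) < a + b by omega)]
  have hd : 2 * (n1 * S2) - 2 * (n2 * S1) = n1 * n2 * (b - c) := by
    linear_combination n1 * hg2 - n2 * hg1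
  have hkey : n2 * S1 < n1 * S2 := by
    nlinarith [mul_pos (mul_pos hn1pos hn2pos) (show (0:ℤ) < b - c by omega)]
  have hz1 : (∑ j ∈ Finset.Icc a c, (-(j : ℂ) + Complex.I)) =
      (-(S1 : ℝ) : ℂ) + ((n1 : ℝ) : ℂ) * Complex.I := by
    rw [sum_eval a c hac]; push_cast [hS1, hn1]; ring
  have hz2 : (∑ j ∈ Finset.Icc a b, (-(j : ℂ) + Complex.I)) =
      (-(S2 : ℝ) : ℂ) + ((n2 : ℝ) : ℂ) * Complex.I := by
    rw [sum_eval a b hab]; push_cast [hS2, hn2]; ring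
  have him1 : (0 : ℝ) < ((-(S1 : ℝ) : ℂ) + ((n1 : ℝ) : ℂ) * Complex.I).im := by
    simp; exact_mod_cast hn1pos
  have him2 : (0 : ℝ) < ((-(S2 : ℝ) : ℂ) + ((n2 : ℝ) : ℂ) * Complex.I).im := by
    simp; exact_mod_cast hn2pos
  refine ⟨hz1 ▸ mem_Hset_of_im_pos him1, hz2 ▸ mem_Hset_of_im_pos him2, ?_⟩
  rw [hz1, hz2]
  unfold phaseH
  have harg := arg_lt_arg_aux (S1 := (S1 : ℝ)) (n1 := (n1 : ℝ)) (S2 := (S2 : ℝ)) (n2 := (n2 : ℝ))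
    (by exact_mod_cast hS1pos) (by exact_mod_cast hn1pos)
    (by exact_mod_cast hS2pos) (by exact_mod_cast hn2pos)
    (by exact_mod_cast hkey)
  have := harg
  push_cast at this ⊢
  gcongr
end
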